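/- arXiv:1702.06751 — 3 statements merged into one kernel-verified Lean document; each statement's English description precedes it below -/
import Mathlib

section
/- If f is convex, L-smooth, with minimizer x*, and x(t) solves the gradient flow x'(t) = −∇f(x(t)) with x(0) = x0, then f(x(t)) − f(x*) ≤ ‖x0 − x*‖² / (t + 2/L) for all t ≥ 0. -/
open Set
open scoped RealInnerProductSpace InnerProductSpace

/-- Gradient inequality for convex differentiable functions. -/
lemma grad_convex_ineq {d : ℕ} (f : EuclideanSpace ℝ (Fin d) → ℝ)
    (hf : Differentiable ℝ f) (hconv : ConvexOn ℝ Set.univ f)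
    (a b : EuclideanSpace ℝ (Fin d)) :
    ⟪gradient f a, b - a⟫_ℝ ≤ f b - f a := by
  set ψ : ℝ → ℝ := fun τ => f (τ • (b - a) + a) with hψ
  have hψconv : ConvexOn ℝ Set.univ ψ := by
    have := hconv.comp_affineMap
      (AffineMap.lineMap a b : ℝ →ᵃ[ℝ] EuclideanSpace ℝ (Fin d))
    simp only [Set.preimage_univ] at this
    have heq : ψ = f ∘ (AffineMap.lineMap a b : ℝ →ᵃ[ℝ] EuclideanSpace ℝ (Fin d)) := by
      funext τ
      show f (τ • (b - a) + a) = f (AffineMap.lineMap a b τ)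
      congr 1
    rw [heq]
    exact this
  have hc : HasDerivAt (fun τ : ℝ => τ • (b - a) + a) (b - a) 0 := by
    simpa using ((hasDerivAt_id (0 : ℝ)).smul_const (b - a)).add_const a
  have hd : HasDerivAt ψ ⟪gradient f a, b - a⟫_ℝ 0 := by
    have h := ((hf _).hasGradientAt.hasFDerivAt).comp_hasDerivAt 0 hc
    simpa [InnerProductSpace.toDual_apply_apply, hψ, Function.comp_def] using h
  have := hψconv.le_slope_of_hasDerivAt (Set.mem_univ 0) (Set.mem_univ 1)
    one_pos hd
  simpa [slope_def_field, hψ] using this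

/-- Descent lemma at a critical point. -/
lemma descent_at_crit {d : ℕ} (f : EuclideanSpace ℝ (Fin d) → ℝ) (L : ℝ) (hL : 0 < L)
    (hf : Differentiable ℝ f)
    (hsmooth : ∀ x y, ‖gradient f x - gradient f y‖ ≤ L * ‖x - y‖)
    (a b : EuclideanSpace ℝ (Fin d)) (ha : gradient f a = 0) :
    f b - f a ≤ L / 2 * ‖b - a‖ ^ 2 := by
  set v := b - a with hv
  set φ : ℝ → ℝ := fun τ => f (τ • v + a) with hφ
  have hc : ∀ τ : ℝ, HasDerivAt (fun τ : ℝ => τ • v + a) v τ := fun τ => by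
    simpa using ((hasDerivAt_id τ).smul_const v).add_const a
  have hd : ∀ τ : ℝ, HasDerivAt φ ⟪gradient f (τ • v + a), v⟫_ℝ τ := fun τ => by
    have h := ((hf _).hasGradientAt.hasFDerivAt).comp_hasDerivAt τ (hc τ)
    simpa [InnerProductSpace.toDual_apply_apply, hφ, Function.comp_def] using h
  have hgradcont : Continuous fun y => gradient f y := by
    have : LipschitzWith L.toNNReal (fun y => gradient f y) := by
      refine LipschitzWith.of_dist_le_mul fun p q => ?_
      rw [dist_eq_norm, dist_eq_norm]
      calc ‖gradient f p - gradient f q‖ ≤ L * ‖p - q‖ := hsmooth p q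
        _ = (L.toNNReal : ℝ) * ‖p - q‖ := by
            rw [Real.coe_toNNReal _ hL.le]
    exact this.continuous
  have hcont : Continuous fun τ : ℝ => ⟪gradient f (τ • v + a), v⟫_ℝ := by
    apply Continuous.inner
    · exact hgradcont.comp (by continuity)
    · exact continuous_const
  have hftc : φ 1 - φ 0 = ∫ τ in (0:ℝ)..1, ⟪gradient f (τ • v + a), v⟫_ℝ := by
    rw [intervalIntegral.integral_eq_sub_of_hasDerivAt (fun τ _ => hd τ)
      (hcont.intervalIntegrable 0 1)]
  have hbound : ∀ τ ∈ Icc (0:ℝ) 1,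
      ⟪gradient f (τ • v + a), v⟫_ℝ ≤ L * ‖v‖ ^ 2 * τ := by
    intro τ hτ
    have h1 : ⟪gradient f (τ • v + a), v⟫_ℝ
        = ⟪gradient f (τ • v + a) - gradient f a, v⟫_ℝ := by
      rw [ha]; simp
    have h2 : ⟪gradient f (τ • v + a) - gradient f a, v⟫_ℝ
        ≤ ‖gradient f (τ • v + a) - gradient f a‖ * ‖v‖ := real_inner_le_norm _ _
    have h3 : ‖gradient f (τ • v + a) - gradient f a‖ ≤ L * (τ * ‖v‖) := by
      have := hsmooth (τ • v + a) a
      simpa [norm_smul, abs_of_nonneg hτ.1] using this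
    calc ⟪gradient f (τ • v + a), v⟫_ℝ
        ≤ ‖gradient f (τ • v + a) - gradient f a‖ * ‖v‖ := h1 ▸ h2
      _ ≤ L * (τ * ‖v‖) * ‖v‖ := by
          apply mul_le_mul_of_nonneg_right h3 (norm_nonneg _)
      _ = L * ‖v‖ ^ 2 * τ := by ring
  have hint : (∫ τ in (0:ℝ)..1, ⟪gradient f (τ • v + a), v⟫_ℝ)
      ≤ ∫ τ in (0:ℝ)..1, L * ‖v‖ ^ 2 * τ := by
    apply intervalIntegral.integral_mono_on zero_le_one
      (hcont.intervalIntegrable 0 1)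
      (((continuous_const.mul continuous_id).intervalIntegrable 0 1))
      hbound
  have hval : (∫ τ in (0:ℝ)..1, L * ‖v‖ ^ 2 * τ) = L / 2 * ‖v‖ ^ 2 := by
    rw [intervalIntegral.integral_const_mul, integral_id]
    ring
  have hmain : φ 1 - φ 0 ≤ L / 2 * ‖v‖ ^ 2 := by
    rw [hftc]; rw [hval] at hint; exact hint
  have h1 : φ 1 = f b := by
    show f ((1:ℝ) • v + a) = f b
    rw [one_smul, hv]
    congr 1
    abel
  have h0 : φ 0 = f a := by
    show f ((0:ℝ) • v + a) = f a
    rw [zero_smul, zero_add]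
  rwa [h1, h0] at hmain

theorem gradient_flow_convex_rate
    {d : ℕ} (f : EuclideanSpace ℝ (Fin d) → ℝ) (L : ℝ) (hL : 0 < L)
    (hf : Differentiable ℝ f)
    (hconv : ConvexOn ℝ Set.univ f)
    (hsmooth : ∀ x y, ‖gradient f x - gradient f y‖ ≤ L * ‖x - y‖)
    (xstar : EuclideanSpace ℝ (Fin d)) (hmin : ∀ y, f xstar ≤ f y)
    (x0 : EuclideanSpace ℝ (Fin d))
    (x : ℝ → EuclideanSpace ℝ (Fin d)) (hx0 : x 0 = x0)
    (hx : ∀ t, HasDerivAt x (-(gradient f (x t))) t) :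
    ∀ t, 0 ≤ t → f (x t) - f xstar ≤ ‖x0 - xstar‖ ^ 2 / (t + 2 / L) := by
  set R : ℝ := ‖x0 - xstar‖ with hR
  set c : ℝ := 2 / L with hc
  have hcpos : 0 < c := by positivity
  set g : ℝ → ℝ := fun t => f (x t) - f xstar with hg
  have hg0 : ∀ t, 0 ≤ g t := fun t => sub_nonneg.2 (hmin _)
  -- derivative of g
  have hgd : ∀ t, HasDerivAt g (-‖gradient f (x t)‖ ^ 2) t := by
    intro t
    have h := ((hf (x t)).hasGradientAt.hasFDerivAt).comp_hasDerivAt t (hx t)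
    have h2 := h.sub_const (f xstar)
    have he : (InnerProductSpace.toDual ℝ (EuclideanSpace ℝ (Fin d))
        (gradient f (x t))) (-(gradient f (x t))) = -‖gradient f (x t)‖ ^ 2 := by
      rw [InnerProductSpace.toDual_apply_apply, inner_neg_right, real_inner_self_eq_norm_sq]
    rw [he] at h2
    exact h2
  -- gradient at xstar is zero
  have hgradstar : gradient f xstar = 0 := by
    have hlm : IsLocalMin f xstar := Filter.Eventually.of_forall hmin
    rw [gradient, hlm.fderiv_eq_zero]
    simp
  -- convexity inequality: g t ≤ ⟪grad, x t - xstar⟫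
  have hconvkey : ∀ t, g t ≤ ⟪gradient f (x t), x t - xstar⟫_ℝ := by
    intro t
    have h := grad_convex_ineq f hf hconv (x t) xstar
    have h2 : ⟪gradient f (x t), xstar - x t⟫_ℝ = -⟪gradient f (x t), x t - xstar⟫_ℝ := by
      rw [← inner_neg_right]; congr 1; abel
    rw [h2] at h
    simp only [hg]
    linarith
  -- distance to xstar is nonincreasing
  have hq : ∀ s, HasDerivAt (fun s => ⟪x s - xstar, x s - xstar⟫_ℝ)
      (2 * ⟪gradient f (x s), xstar - x s⟫_ℝ) s := by
    intro s
    have h := HasDerivAt.inner ℝ ((hx s).sub_const xstar) ((hx s).sub_const xstar)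
    have heq : ⟪x s - xstar, -(gradient f (x s))⟫_ℝ + ⟪-(gradient f (x s)), x s - xstar⟫_ℝ
        = 2 * ⟪gradient f (x s), xstar - x s⟫_ℝ := by
      rw [inner_neg_right, inner_neg_left,
        show xstar - x s = -(x s - xstar) from by abel, inner_neg_right,
        real_inner_comm (x s - xstar)]
      ring
    rw [← heq]
    exact h
  have hqanti : Antitone (fun s => ⟪x s - xstar, x s - xstar⟫_ℝ) := by
    apply antitone_of_deriv_nonpos
    · exact fun s => (hq s).differentiableAt
    · intro s
      rw [(hq s).deriv]
      have h1 : ⟪gradient f (x s), xstar - x s⟫_ℝ ≤ f xstar - f (x s) :=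
        grad_convex_ineq f hf hconv (x s) xstar
      have h2 : f xstar - f (x s) ≤ 0 := by linarith [hmin (x s)]
      linarith
  have hdist : ∀ s, 0 ≤ s → ‖x s - xstar‖ ≤ R := by
    intro s hs
    have h := hqanti hs
    change ⟪x s - xstar, x s - xstar⟫_ℝ ≤ ⟪x 0 - xstar, x 0 - xstar⟫_ℝ at h
    rw [real_inner_self_eq_norm_sq, real_inner_self_eq_norm_sq, hx0] at h
    have := Real.sqrt_le_sqrt h
    rwa [Real.sqrt_sq (norm_nonneg _), Real.sqrt_sq (norm_nonneg _)] at this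
  -- initial bound
  have hinit : g 0 ≤ L / 2 * R ^ 2 := by
    have h := descent_at_crit f L hL hf hsmooth xstar x0 hgradstar
    simpa [hg, hx0, hR] using h
  intro t ht
  show g t ≤ R ^ 2 / (t + c)
  by_cases hR0 : R = 0
  · -- degenerate case
    have hganti : Antitone g :=
      antitone_of_deriv_nonpos (fun s => (hgd s).differentiableAt)
        (fun s => by rw [(hgd s).deriv]; exact neg_nonpos.mpr (by positivity))
    have hg00 : g 0 = 0 := by
      have hx0star : x0 = xstar := by
        rwa [hR, norm_eq_zero, sub_eq_zero] at hR0
      simp [hg, hx0, hx0star]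
    have : g t ≤ 0 := le_trans (hganti ht) (le_of_eq hg00)
    have hrhs : R ^ 2 / (t + c) = 0 := by rw [hR0]; simp
    rw [hrhs]
    exact this
  · have hRpos : 0 < R := lt_of_le_of_ne (norm_nonneg _) (Ne.symm hR0)
    have htc : 0 < t + c := by linarith
    have key : ∀ ε : ℝ, 0 < ε → g t ≤ (R ^ 2 + ε) * (t + c)⁻¹ := by
      intro ε hε
      set B : ℝ → ℝ := fun s => (R ^ 2 + ε) * (s + c)⁻¹ with hB
      set B' : ℝ → ℝ := fun s => (R ^ 2 + ε) * (-1 / (s + c) ^ 2) with hB'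
      have hBd : ∀ s ∈ Icc (0:ℝ) t, HasDerivAt B (B' s) s := by
        intro s hs
        have hsc : (0:ℝ) < s + c := by linarith [hs.1]
        have h1 : HasDerivAt (fun y : ℝ => (y + c)⁻¹) (-1 / (s + c) ^ 2) s := by
          simpa [Pi.inv_def] using ((hasDerivAt_id s).add_const c).inv hsc.ne'
        simpa [hB, hB'] using h1.const_mul (R ^ 2 + ε)
      have := image_le_of_deriv_right_lt_deriv_boundary'
        (f := g) (f' := fun s => -‖gradient f (x s)‖ ^ 2) (a := 0) (b := t)
        (B := B) (B' := B')
        (fun s _ => (hgd s).continuousAt.continuousWithinAt)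
        (fun s _ => (hgd s).hasDerivWithinAt)
        ?ha ?hBc (fun s hs => (hBd s ⟨hs.1, hs.2.le⟩).hasDerivWithinAt) ?hbound
        (right_mem_Icc.2 ht)
      · exact this
      case ha =>
        have hB0 : B 0 = (R ^ 2 + ε) * (L / 2) := by
          simp only [hB, zero_add, hc, inv_div]
        rw [hB0]
        calc g 0 ≤ L / 2 * R ^ 2 := hinit
          _ ≤ (R ^ 2 + ε) * (L / 2) := by nlinarith
      case hBc =>
        apply ContinuousOn.mul continuousOn_const
        apply ContinuousOn.inv₀
        · exact (continuous_id.add continuous_const).continuousOn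
        · intro s hs
          have : (0:ℝ) < s + c := by linarith [hs.1]
          exact this.ne'
      case hbound =>
        intro s hs hgBs
        have hsc : (0:ℝ) < s + c := by linarith [hs.1]
        set G : ℝ := ‖gradient f (x s)‖ with hG
        have hGn : 0 ≤ G := norm_nonneg _
        have h1 : g s ≤ G * R := by
          calc g s ≤ ⟪gradient f (x s), x s - xstar⟫_ℝ := hconvkey s
            _ ≤ ‖gradient f (x s)‖ * ‖x s - xstar‖ := real_inner_le_norm _ _
            _ ≤ G * R := mul_le_mul_of_nonneg_left (hdist s hs.1) hGn
        have heq : g s * (s + c) = R ^ 2 + ε := by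
          rw [hgBs]
          simp only [hB]
          field_simp
        -- goal : -G^2 < B' s
        show -G ^ 2 < (R ^ 2 + ε) * (-1 / (s + c) ^ 2)
        rw [show (R ^ 2 + ε) * (-1 / (s + c) ^ 2) = -((R ^ 2 + ε) / (s + c) ^ 2) by ring,
          neg_lt_neg_iff]
        rw [div_lt_iff₀ (by positivity)]
        -- R^2 + ε < G^2 * (s+c)^2
        have h2 : R ^ 2 + ε ≤ G * R * (s + c) := by
          calc R ^ 2 + ε = g s * (s + c) := heq.symm
            _ ≤ G * R * (s + c) := mul_le_mul_of_nonneg_right h1 hsc.le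
        nlinarith [sq_nonneg (G * (s + c)), hRpos, hε, mul_pos hRpos hRpos]
    -- take ε → 0
    have hfinal : g t * (t + c) ≤ R ^ 2 := by
      apply le_of_forall_pos_le_add
      intro ε hε
      have := key ε hε
      calc g t * (t + c) ≤ (R ^ 2 + ε) * (t + c)⁻¹ * (t + c) := by
            apply mul_le_mul_of_nonneg_right this htc.le
        _ = R ^ 2 + ε := by field_simp
    rw [div_eq_mul_inv]
    calc g t = g t * (t + c) * (t + c)⁻¹ := by field_simp
      _ ≤ R ^ 2 * (t + c)⁻¹ := by
          apply mul_le_mul_of_nonneg_right hfinal (by positivity)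
end

section
/- Let 0 < μ ≤ L, h > 0, and a linear two-step method with coefficients ρ₀, ρ₁, σ₀, σ₁ satisfy (ρ₁ + μhσ₁)² ≤ 4(ρ₀ + μhσ₀) and (ρ₁ + Lhσ₁)² ≤ 4(ρ₀ + Lhσ₀). Then for every λ ∈ [μ, L] the roots of π_λ(z) = z² + (ρ₁ + λhσ₁)z + (ρ₀ + λhσ₀) are complex conjugates, and max over λ ∈ [μ, L] of the squared modulus of the roots equals max{ρ₀ + μhσ₀, ρ₀ + Lhσ₀}. -/
private lemma disc_le (μ L h ρ₀ ρ₁ σ₀ σ₁ lam : ℝ) (hμL : μ ≤ L)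
    (h1 : (ρ₁ + μ * h * σ₁) ^ 2 ≤ 4 * (ρ₀ + μ * h * σ₀))
    (h2 : (ρ₁ + L * h * σ₁) ^ 2 ≤ 4 * (ρ₀ + L * h * σ₀))
    (hl : μ ≤ lam) (hl2 : lam ≤ L) :
    (ρ₁ + lam * h * σ₁) ^ 2 ≤ 4 * (ρ₀ + lam * h * σ₀) := by
  rcases eq_or_lt_of_le hμL with heq | hlt
  · have : lam = μ := le_antisymm (heq ▸ hl2) hl
    subst this; exact h1
  · nlinarith [mul_le_mul_of_nonneg_left h1 (sub_nonneg.2 hl2),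
      mul_le_mul_of_nonneg_left h2 (sub_nonneg.2 hl),
      mul_nonneg (mul_nonneg (sub_nonneg.2 hl) (sub_nonneg.2 hl2))
        (mul_nonneg (sub_nonneg.2 (le_of_lt hlt)) (sq_nonneg (h*σ₁))),
      hlt, sq_nonneg (h*σ₁)]

private lemma root_exists (b c : ℝ) (hd : b^2 ≤ 4*c) :
    ∃ z : ℂ, z^2 + (b:ℂ)*z + (c:ℂ) = 0 ∧ ‖z‖ ^ 2 = c := by
  set s := Real.sqrt (4*c - b^2) with hs
  have hs2 : s^2 = 4*c - b^2 := Real.sq_sqrt (by linarith)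
  refine ⟨(-(b/2) : ℝ) + (s/2 : ℝ) * Complex.I, ?_, ?_⟩
  · have hsC : ((s:ℂ))^2 = 4*(c:ℂ) - (b:ℂ)^2 := by
      rw [show ((s:ℂ))^2 = ((s^2 : ℝ) : ℂ) by push_cast; ring, hs2]; push_cast; ring
    push_cast
    linear_combination (s:ℂ)^2/4 * Complex.I_sq - (1/4) * hsC
  · rw [Complex.sq_norm, Complex.normSq_apply]
    simp
    nlinarith [hs2]

private lemma root_sq_abs (b c : ℝ) (z : ℂ) (hd : b^2 ≤ 4*c)
    (hz : z^2 + (b:ℂ)*z + (c:ℂ) = 0)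
    (hw : (starRingEnd ℂ z)^2 + (b:ℂ)*(starRingEnd ℂ z) + (c:ℂ) = 0) :
    ‖z‖ ^ 2 = c := by
  set w := starRingEnd ℂ z with hwdef
  have hfac : (z - w) * (z + w + b) = 0 := by linear_combination hz - hw
  rcases mul_eq_zero.1 hfac with h0 | h0
  · have hzw : z = w := sub_eq_zero.1 h0
    have him : z.im = 0 := by
      have := congrArg Complex.im hzw
      simp [hwdef] at this; linarith
    set x := z.re with hx
    have hre : x^2 + b*x + c = 0 := by
      have := congrArg Complex.re hz
      simp [Complex.add_re, Complex.mul_re, pow_two, Complex.mul_im, him] at this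
      linarith [this]
    have hx2 : x^2 = c := by nlinarith [sq_nonneg (2*x + b)]
    rw [Complex.sq_norm, Complex.normSq_apply, him]; nlinarith [hx2]
  · have hc : (c:ℂ) = z * w := by linear_combination hz - z * h0
    rw [hwdef, Complex.mul_conj] at hc
    have : c = Complex.normSq z := by exact_mod_cast hc
    rw [Complex.sq_norm, this]

theorem two_step_complex_roots_max_modulus
    (μ L h ρ₀ ρ₁ σ₀ σ₁ : ℝ) (hμ : 0 < μ) (hμL : μ ≤ L) (hh : 0 < h)
    (h1 : (ρ₁ + μ * h * σ₁) ^ 2 ≤ 4 * (ρ₀ + μ * h * σ₀))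
    (h2 : (ρ₁ + L * h * σ₁) ^ 2 ≤ 4 * (ρ₀ + L * h * σ₀)) :
    (∀ lam ∈ Set.Icc μ L, ∀ z : ℂ,
      z ^ 2 + ((ρ₁ + lam * h * σ₁ : ℝ) : ℂ) * z + ((ρ₀ + lam * h * σ₀ : ℝ) : ℂ) = 0 →
        (starRingEnd ℂ z) ^ 2 + ((ρ₁ + lam * h * σ₁ : ℝ) : ℂ) * (starRingEnd ℂ z) +
          ((ρ₀ + lam * h * σ₀ : ℝ) : ℂ) = 0)
    ∧ IsGreatest
        {m : ℝ | ∃ lam ∈ Set.Icc μ L, ∃ z : ℂ,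
          z ^ 2 + ((ρ₁ + lam * h * σ₁ : ℝ) : ℂ) * z + ((ρ₀ + lam * h * σ₀ : ℝ) : ℂ) = 0 ∧
          m = ‖z‖ ^ 2}
        (max (ρ₀ + μ * h * σ₀) (ρ₀ + L * h * σ₀)) := by
  have conj_root : ∀ lam ∈ Set.Icc μ L, ∀ z : ℂ,
      z ^ 2 + ((ρ₁ + lam * h * σ₁ : ℝ) : ℂ) * z + ((ρ₀ + lam * h * σ₀ : ℝ) : ℂ) = 0 →
        (starRingEnd ℂ z) ^ 2 + ((ρ₁ + lam * h * σ₁ : ℝ) : ℂ) * (starRingEnd ℂ z) +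
          ((ρ₀ + lam * h * σ₀ : ℝ) : ℂ) = 0 := by
    intro lam _ z hz
    have := congrArg (starRingEnd ℂ) hz
    simpa [map_add, map_mul, map_pow, Complex.conj_ofReal] using this
  refine ⟨conj_root, ?_, ?_⟩
  · -- membership
    rcases le_total (ρ₀ + μ * h * σ₀) (ρ₀ + L * h * σ₀) with hle | hle
    · rw [max_eq_right hle]
      obtain ⟨z, hz, habs⟩ := root_exists (ρ₁ + L * h * σ₁) (ρ₀ + L * h * σ₀) h2
      exact ⟨L, ⟨hμL, le_refl L⟩, z, hz, habs.symm⟩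
    · rw [max_eq_left hle]
      obtain ⟨z, hz, habs⟩ := root_exists (ρ₁ + μ * h * σ₁) (ρ₀ + μ * h * σ₀) h1
      exact ⟨μ, ⟨le_refl μ, hμL⟩, z, hz, habs.symm⟩
  · -- upper bound
    rintro m ⟨lam, hlam, z, hz, hm⟩
    have hd := disc_le μ L h ρ₀ ρ₁ σ₀ σ₁ lam hμL h1 h2 hlam.1 hlam.2
    have hw := conj_root lam hlam z hz
    have habs := root_sq_abs (ρ₁ + lam * h * σ₁) (ρ₀ + lam * h * σ₀) z hd hz hw
    rw [hm, habs]
    rcases le_total 0 σ₀ with hσ | hσ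
    · exact le_max_of_le_right (by nlinarith [mul_nonneg (mul_nonneg (sub_nonneg.2 hlam.2) hh.le) hσ])
    · exact le_max_of_le_left (by nlinarith [mul_nonneg (mul_nonneg (sub_nonneg.2 hlam.1) hh.le) (neg_nonneg.2 hσ)])
end

section
/- Let 0 < μ ≤ L, β = (1 − √(μ/L))/(1 + √(μ/L)), and h = 1/√(μL). Then for every λ ∈ [μ, L], both roots of the polynomial π_λ(z) = z² − (1 + β²)z + β² + λh(1 − β²)z have modulus at most β (equivalently, the discriminant (−(1+β²)+λh(1−β²))² ≤ 4β² so roots are complex of modulus exactly β, or real with modulus ≤ β at endpoints). -/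
theorem heavy_ball_roots_modulus_le_beta
    (μ L β h : ℝ) (hμ : 0 < μ) (hμL : μ ≤ L)
    (hβ : β = (1 - Real.sqrt (μ / L)) / (1 + Real.sqrt (μ / L)))
    (hh : h = 1 / Real.sqrt (μ * L)) :
    ∀ lam ∈ Set.Icc μ L, ∀ z : ℂ,
      z ^ 2 + ((lam * h * (1 - β ^ 2) - (1 + β ^ 2) : ℝ) : ℂ) * z + ((β ^ 2 : ℝ) : ℂ) = 0 →
        ‖z‖ ≤ β := by
  intro lam hlam z hz
  have hL : 0 < L := lt_of_lt_of_le hμ hμL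
  set s := Real.sqrt (μ / L) with hs
  have hs0 : 0 < s := Real.sqrt_pos.mpr (div_pos hμ hL)
  have hs2 : s ^ 2 = μ / L := Real.sq_sqrt (le_of_lt (div_pos hμ hL))
  have hs1 : s ≤ 1 := by
    nlinarith [hs2, (div_le_one hL).mpr hμL]
  have hsqrt : Real.sqrt (μ * L) = s * L := by
    rw [show μ * L = (μ / L) * L ^ 2 by field_simp,
      Real.sqrt_mul (le_of_lt (div_pos hμ hL)), Real.sqrt_sq hL.le]
  have h1s : 0 < 1 + s := by linarith
  have hβ0 : 0 ≤ β := by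
    rw [hβ]; exact div_nonneg (by linarith) h1s.le
  have hμeq : μ = s ^ 2 * L := by
    field_simp at hs2; linarith
  set b : ℝ := lam * h * (1 - β ^ 2) - (1 + β ^ 2) with hb
  clear_value b
  have elow : lam * h * (1 - β ^ 2) - (1 - β) ^ 2 = 4 * (lam - μ) / (L * (1 + s) ^ 2) := by
    rw [hβ, hh, hsqrt, hμeq]
    field_simp
    ring
  have ehigh : (1 + β) ^ 2 - lam * h * (1 - β ^ 2) = 4 * (L - lam) / (L * (1 + s) ^ 2) := by
    rw [hβ, hh, hsqrt]
    field_simp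
    ring
  have hlow : (1 - β) ^ 2 ≤ lam * h * (1 - β ^ 2) := by
    have : (0:ℝ) ≤ 4 * (lam - μ) / (L * (1 + s) ^ 2) :=
      div_nonneg (by linarith [hlam.1]) (by positivity)
    linarith [elow]
  have hhigh : lam * h * (1 - β ^ 2) ≤ (1 + β) ^ 2 := by
    have : (0:ℝ) ≤ 4 * (L - lam) / (L * (1 + s) ^ 2) :=
      div_nonneg (by linarith [hlam.2]) (by positivity)
    linarith [ehigh]
  have key : b ^ 2 ≤ 4 * β ^ 2 := by
    have h1 : -(2 * β) ≤ b := by rw [hb]; nlinarith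
    have h2 : b ≤ 2 * β := by rw [hb]; nlinarith
    nlinarith
  clear_value s
  clear elow ehigh hlow hhigh hs2 hμeq hsqrt hh hβ hs hs0 hs1 h1s hb
  -- extract real and imaginary parts
  obtain ⟨x, y⟩ := z
  have hre : x ^ 2 - y ^ 2 + b * x + β ^ 2 = 0 := by
    have := congrArg Complex.re hz
    simp [pow_two, Complex.mul_re, Complex.mul_im] at this
    linear_combination this
  have him : y * (2 * x + b) = 0 := by
    have := congrArg Complex.im hz
    simp [pow_two, Complex.mul_re, Complex.mul_im] at this
    linear_combination this
  have habs : ‖(⟨x, y⟩ : ℂ)‖ = Real.sqrt (x ^ 2 + y ^ 2) := by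
    rw [Complex.norm_def, Complex.normSq_mk]; ring_nf
  rw [habs]
  have hsq : x ^ 2 + y ^ 2 ≤ β ^ 2 := by
    rcases mul_eq_zero.mp him with hy | hxb
    · -- y = 0
      subst hy
      have h4 : (2 * x + b) ^ 2 = b ^ 2 - 4 * β ^ 2 := by nlinarith [hre]
      have h5 : (2 * x + b) ^ 2 = 0 := le_antisymm (by linarith) (sq_nonneg _)
      have h6 : 2 * x + b = 0 := by
        have := sq_eq_zero_iff.mp h5
        linarith
      have hx : x = -b / 2 := by linarith
      have hx2 : x ^ 2 = b ^ 2 / 4 := by rw [hx]; ring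
      nlinarith
    · -- 2x + b = 0
      have hx : x = -b / 2 := by linarith
      have hbx : b * x = -(b ^ 2) / 2 := by rw [hx]; ring
      have hx2 : x ^ 2 = b ^ 2 / 4 := by rw [hx]; ring
      linarith
  calc Real.sqrt (x ^ 2 + y ^ 2) ≤ Real.sqrt (β ^ 2) := Real.sqrt_le_sqrt hsq
    _ = β := Real.sqrt_sq hβ0
end
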